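/- Let λ, r₀, r₂ be positive real numbers, let u : ℝ → ℝ be twice differentiable with v := u' satisfying v'(t) ≥ (λ/r₀²)·v(t)² − r₀·r₂ for all t ∈ ℝ. If there exists t₀ ∈ ℝ with v(t₀) < −√(r₀³·r₂/λ), then for all t ≤ t₀ one has v(t) ≤ v(t₀) < 0 and v(t) ≤ v(t₀) + [λ·v(t₀)²/r₀² − r₀·r₂]·(t − t₀), and consequently u(t) ≥ u(t₀) − v(t₀)·(t₀ − t) → +∞ as t → −∞. -/

import Mathlib

open Filter

/-- Backward blow-up: if `v = u'` satisfies the Riccati differential inequality and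
`v(t₀) < −√(r₀³r₂/λ)`, then for all `t ≤ t₀` one has `v(t) ≤ v(t₀) < 0` and
`v(t) ≤ v(t₀) + (λ·v(t₀)²/r₀² − r₀·r₂)·(t − t₀)`, and consequently
`u(t) ≥ u(t₀) − v(t₀)·(t₀ − t) → +∞` as `t → −∞`. -/
theorem landau_hadamard_backward_blowup (lam r₀ r₂ : ℝ)
    (hlam : 0 < lam) (hr₀ : 0 < r₀) (hr₂ : 0 < r₂)
    (u : ℝ → ℝ) (hu : Differentiable ℝ u) (hu' : Differentiable ℝ (deriv u))
    (v : ℝ → ℝ) (hv : v = deriv u)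
    (hineq : ∀ t : ℝ, (lam / r₀ ^ 2) * (v t) ^ 2 - r₀ * r₂ ≤ deriv v t)
    (t₀ : ℝ) (ht₀ : v t₀ < -Real.sqrt (r₀ ^ 3 * r₂ / lam)) :
    (∀ t ≤ t₀, v t ≤ v t₀) ∧ v t₀ < 0 ∧
      (∀ t ≤ t₀, v t ≤ v t₀ + (lam * (v t₀) ^ 2 / r₀ ^ 2 - r₀ * r₂) * (t - t₀)) ∧
      (∀ t ≤ t₀, u t₀ - v t₀ * (t₀ - t) ≤ u t) ∧
      Tendsto (fun t => u t₀ - v t₀ * (t₀ - t)) atBot atTop := by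
  have hvdiff : Differentiable ℝ v := hv ▸ hu'
  have hvcont : Continuous v := hvdiff.continuous
  have hX : 0 ≤ r₀ ^ 3 * r₂ / lam := by positivity
  have hvt₀neg : v t₀ < 0 := lt_of_lt_of_le ht₀ (by simpa using Real.sqrt_nonneg _)
  -- v t₀ ^ 2 > r₀^3 r₂ / lam
  have hsq : r₀ ^ 3 * r₂ / lam < (v t₀) ^ 2 := by
    have h1 : Real.sqrt (r₀ ^ 3 * r₂ / lam) < -v t₀ := by linarith
    nlinarith [Real.sq_sqrt hX, Real.sqrt_nonneg (r₀ ^ 3 * r₂ / lam)]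
  set c : ℝ := lam * (v t₀) ^ 2 / r₀ ^ 2 - r₀ * r₂ with hc
  have hcpos : 0 < c := by
    have : r₀ * r₂ < lam * (v t₀) ^ 2 / r₀ ^ 2 := by
      rw [lt_div_iff₀ (by positivity)]
      have := (div_lt_iff₀ hlam).mp hsq
      nlinarith
    simpa [hc, sub_pos] using this
  have hceq : ∀ w : ℝ, v w ≤ v t₀ → c ≤ deriv v w := by
    intro w hw
    have hsq' : (v t₀) ^ 2 ≤ (v w) ^ 2 := by
      have hk : 0 ≤ (v t₀ - v w) * (-(v t₀ + v w)) :=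
        mul_nonneg (by linarith) (by linarith)
      nlinarith [hk]
    have := hineq w
    have h3 : lam / r₀ ^ 2 * (v t₀) ^ 2 ≤ lam / r₀ ^ 2 * (v w) ^ 2 :=
      mul_le_mul_of_nonneg_left hsq' (by positivity)
    have : lam / r₀ ^ 2 * (v t₀) ^ 2 - r₀ * r₂ ≤ deriv v w := by linarith
    calc c = lam / r₀ ^ 2 * (v t₀) ^ 2 - r₀ * r₂ := by ring
    _ ≤ deriv v w := this
  -- Claim 1
  have claim1 : ∀ t ≤ t₀, v t ≤ v t₀ := by
    intro t₁ ht₁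
    by_contra hcon
    push_neg at hcon
    have ht₁lt : t₁ < t₀ := lt_of_le_of_ne ht₁ (by rintro rfl; exact lt_irrefl _ hcon)
    set S : Set ℝ := {t ∈ Set.Icc t₁ t₀ | v t ≤ v t₀} with hS
    have hSne : S.Nonempty := ⟨t₀, ⟨⟨le_of_lt ht₁lt, le_refl _⟩, le_refl _⟩⟩
    have hSclosed : IsClosed S := by
      have : S = Set.Icc t₁ t₀ ∩ v ⁻¹' Set.Iic (v t₀) := by
        ext x; simp [hS, Set.mem_Icc, and_assoc]
      rw [this]
      exact isClosed_Icc.inter (isClosed_Iic.preimage hvcont)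
    have hSbdd : BddBelow S := ⟨t₁, fun x hx => hx.1.1⟩
    set s : ℝ := sInf S with hs
    have hsmem : s ∈ S := hSclosed.csInf_mem hSne hSbdd
    have hst₁ : t₁ < s := by
      rcases lt_or_eq_of_le hsmem.1.1 with h | h
      · exact h
      · exact absurd hsmem.2 (by rw [← h]; exact not_le.mpr hcon)
    have hleft : ∀ x, x ∈ Set.Ico t₁ s → v t₀ < v x := by
      intro x hx
      by_contra hle
      push_neg at hle
      have : x ∈ S := ⟨⟨hx.1, le_trans (le_of_lt hx.2) hsmem.1.2⟩, hle⟩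
      exact absurd (csInf_le hSbdd this) (not_le.mpr hx.2)
    -- v s = v t₀
    have hvs_le : v s ≤ v t₀ := hsmem.2
    have hvs_ge : v t₀ ≤ v s := by
      have htend : Tendsto v (nhdsWithin s (Set.Iio s)) (nhds (v s)) :=
        (hvcont.continuousAt).continuousWithinAt.tendsto
      refine ge_of_tendsto htend ?_
      filter_upwards [Ioo_mem_nhdsLT_of_mem ⟨hst₁, le_refl s⟩] with x hx
      exact le_of_lt (hleft x ⟨le_of_lt hx.1, hx.2⟩)

    have hvs : v s = v t₀ := le_antisymm hvs_le hvs_ge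
    -- derivative at s from the left is ≤ 0
    have hder : HasDerivAt v (deriv v s) s := (hvdiff s).hasDerivAt
    have hslope : Tendsto (slope v s) (nhdsWithin s {s}ᶜ) (nhds (deriv v s)) :=
      hasDerivAt_iff_tendsto_slope.mp hder
    have hslope' : Tendsto (slope v s) (nhdsWithin s (Set.Iio s)) (nhds (deriv v s)) :=
      hslope.mono_left (nhdsWithin_mono s (fun x hx => ne_of_lt hx))
    have hderle : deriv v s ≤ 0 := by
      refine le_of_tendsto hslope' ?_
      filter_upwards [Ioo_mem_nhdsLT_of_mem ⟨hst₁, le_refl s⟩] with x hx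
      have hnum : 0 < v x - v s := by
        rw [hvs]; exact sub_pos.mpr (hleft x ⟨le_of_lt hx.1, hx.2⟩)
      have hden : x - s < 0 := sub_neg.mpr hx.2
      rw [slope_def_field]
      exact le_of_lt (div_neg_of_pos_of_neg hnum hden)
    have : c ≤ deriv v s := hceq s hvs.le
    linarith
  -- Claim 3
  have claim3 : ∀ t ≤ t₀, v t ≤ v t₀ + c * (t - t₀) := by
    intro t ht
    have hmono : MonotoneOn (fun x => v x - c * x) (Set.Icc t t₀) := by
      apply monotoneOn_of_deriv_nonneg (convex_Icc t t₀)
      · exact (hvcont.sub (continuous_const.mul continuous_id)).continuousOn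
      · intro x hx
        exact ((hvdiff x).sub (differentiableAt_fun_id.const_mul c)).differentiableWithinAt
      · intro x hx
        rw [interior_Icc] at hx
        have hd : deriv (fun x => v x - c * x) x = deriv v x - c := by
          rw [deriv_fun_sub (hvdiff x) (differentiableAt_fun_id.const_mul c),
            deriv_const_mul _ differentiableAt_fun_id, deriv_id'', mul_one]
        rw [hd, sub_nonneg]
        exact hceq x (claim1 x (hx.2.le.trans (le_refl _)))
    by_cases hlt : t = t₀
    · subst hlt; simp
    have := hmono (Set.left_mem_Icc.mpr ht) (Set.right_mem_Icc.mpr ht) ht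
    simp only at this
    linarith
  -- Claim 4
  have claim4 : ∀ t ≤ t₀, u t₀ - v t₀ * (t₀ - t) ≤ u t := by
    intro t ht
    have hanti : AntitoneOn (fun x => u x - v t₀ * x) (Set.Icc t t₀) := by
      apply antitoneOn_of_deriv_nonpos (convex_Icc t t₀)
      · exact ((hu.continuous).sub (continuous_const.mul continuous_id)).continuousOn
      · intro x hx
        exact ((hu x).sub (differentiableAt_fun_id.const_mul (v t₀))).differentiableWithinAt
      · intro x hx
        rw [interior_Icc] at hx
        have hd : deriv (fun x => u x - v t₀ * x) x = deriv u x - v t₀ := by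
          rw [deriv_fun_sub (hu x) (differentiableAt_fun_id.const_mul (v t₀)),
            deriv_const_mul _ differentiableAt_fun_id, deriv_id'', mul_one]
        rw [hd, sub_nonpos, ← hv]
        exact claim1 x hx.2.le
    have := hanti (Set.left_mem_Icc.mpr ht) (Set.right_mem_Icc.mpr ht) ht
    simp only at this
    linarith
  -- Claim 5
  have claim5 : Tendsto (fun t => u t₀ - v t₀ * (t₀ - t)) atBot atTop := by
    have h1 : Tendsto (fun t : ℝ => v t₀ * t) atBot atTop :=
      tendsto_id.const_mul_atBot_of_neg hvt₀neg
    have h2 : Tendsto (fun t : ℝ => (u t₀ - v t₀ * t₀) + v t₀ * t) atBot atTop :=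
      tendsto_atTop_add_const_left _ _ h1
    convert h2 using 2 with t
    ring
  exact ⟨claim1, hvt₀neg, claim3, claim4, claim5⟩
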